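/- Let G be a graph with induced subgraphs G_1 and G_2 forming a splitting of G along a single edge e (i.e., V(G) = V(G_1) ∪ V(G_2), V(G_1) ∩ V(G_2) is the two-vertex set of e, and removing these two vertices disconnects G_1∖e from G_2∖e). If G_1 is bipartite, then I_G = I_{G_1} + I_{G_2} in K[E(G)]. -/

import Mathlib

open MvPolynomial

/-- The toric ideal of a graph: the graph has vertex set `V` and edges indexed by `E` via
`ε : E → Sym2 V`; the toric ideal is the kernel of the `K`-algebra map
`K[e : E] → K[x : V]` sending the edge variable `e` to the product of the variables of its
two endpoints. -/
noncomputable def graphToricIdeal (K : Type*) [Field K] {V E : Type*} (ε : E → Sym2 V) :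
    Ideal (MvPolynomial E K) :=
  RingHom.ker (MvPolynomial.aeval
    (fun e => Sym2.lift ⟨fun a b => (X a * X b : MvPolynomial V K),
      fun a b => by ring⟩ (ε e)) : MvPolynomial E K →ₐ[K] MvPolynomial V K)

namespace TS13
open scoped Classical

variable {V E : Type*}

/-- degree finsupp of an unordered pair -/
noncomputable def degF : Sym2 V → (V →₀ ℕ) :=
  Sym2.lift ⟨fun x y => Finsupp.single x 1 + Finsupp.single y 1, fun x y => add_comm _ _⟩

lemma degF_mk (x y : V) : degF s(x, y) = Finsupp.single x 1 + Finsupp.single y 1 := rfl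

lemma degF_apply (p q x : V) :
    degF s(p, q) x = (if p = x then 1 else 0) + (if q = x then 1 else 0) := by
  classical
  simp [degF_mk, Finsupp.single_apply]

/-- the map sending an edge to the product of its endpoint variables -/
noncomputable def edgeF (K : Type*) [Field K] (ε : E → Sym2 V) : E → MvPolynomial V K :=
  fun e => Sym2.lift ⟨fun a b => (X a * X b : MvPolynomial V K), fun a b => by ring⟩ (ε e)

lemma edgeF_eq (K : Type*) [Field K] (ε : E → Sym2 V) (e : E) :
    edgeF K ε e = monomial (degF (ε e)) (1 : K) := by
  unfold edgeF
  refine Sym2.ind (fun x y => ?_) (ε e)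
  rw [Sym2.lift_mk, degF_mk]
  show (X x * X y : MvPolynomial V K) = _
  have hX : ∀ z : V, (X z : MvPolynomial V K) = monomial (Finsupp.single z 1) 1 := by
    intro z; rw [← pow_one (X z), X_pow_eq_monomial]
  rw [hX, hX, monomial_mul, one_mul]

/-- total vertex-degree vector of a multiset of edges -/
noncomputable def L (ε : E → Sym2 V) (a : E →₀ ℕ) : V →₀ ℕ :=
  a.sum fun e n => n • degF (ε e)

lemma L_add (ε : E → Sym2 V) (a b : E →₀ ℕ) : L ε (a + b) = L ε a + L ε b :=
  Finsupp.sum_add_index' (by simp) (by intro e m n; rw [add_smul])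

lemma L_single (ε : E → Sym2 V) (e : E) (n : ℕ) :
    L ε (Finsupp.single e n) = n • degF (ε e) :=
  Finsupp.sum_single_index (by simp)

lemma aeval_monomial' (K : Type*) [Field K] (ε : E → Sym2 V) (a : E →₀ ℕ) (r : K) :
    aeval (edgeF K ε) (monomial a r) = monomial (L ε a) r := by
  induction a using Finsupp.induction with
  | zero => simp [L, aeval_monomial]
  | single_add e n f he hn ih =>
    have h1 : monomial (Finsupp.single e n + f) r
        = monomial (Finsupp.single e n) (1 : K) * monomial f r := by
      rw [monomial_mul, one_mul]
    rw [h1, map_mul, ih]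
    rw [← X_pow_eq_monomial, map_pow, aeval_X, edgeF_eq, monomial_pow, one_pow,
      monomial_mul, one_mul, L_add, L_single]
lemma degF_apply_ne_zero {s : Sym2 V} {x : V} (h : degF s x ≠ 0) : x ∈ s := by
  induction s using Sym2.ind with
  | _ p q =>
    rw [degF_apply] at h
    rw [Sym2.mem_iff]
    by_contra hc
    push_neg at hc
    simp [Ne.symm hc.1, Ne.symm hc.2] at h

lemma L_apply (ε : E → Sym2 V) (a : E →₀ ℕ) (x : V) :
    L ε a x = a.sum fun e n => n * degF (ε e) x := by
  rw [L, Finsupp.sum_apply]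
  rfl

lemma L_eq_zero_outside (ε : E → Sym2 V) (S : Set V) (s : E →₀ ℕ)
    (hs : ∀ e ∈ s.support, ∀ x ∈ ε e, x ∈ S) {x : V} (hx : x ∉ S) : L ε s x = 0 := by
  rw [L_apply]
  apply Finset.sum_eq_zero
  intro e he
  have : degF (ε e) x = 0 := by
    by_contra h
    exact hx (hs e he x (degF_apply_ne_zero h))
  simp [this]

/-- count of degrees on one colour class -/
noncomputable def countB (c : V → Bool) : (V →₀ ℕ) →+ ℕ :=
  Finsupp.liftAddHom (fun x => if c x then AddMonoidHom.id ℕ else 0)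

lemma countB_single (c : V → Bool) (x : V) (n : ℕ) :
    countB c (Finsupp.single x n) = if c x then n else 0 := by
  rw [countB, Finsupp.liftAddHom_apply_single]
  split <;> rfl

lemma countB_degF (c : V → Bool) (p q : V) (h : c p ≠ c q) :
    countB c (degF s(p, q)) = 1 := by
  rw [degF_mk, map_add, countB_single, countB_single]
  cases hp : c p <;> cases hq : c q <;> simp_all

lemma countB_L (c : V → Bool) (ε : E → Sym2 V) (s : E →₀ ℕ)
    (hs : ∀ e ∈ s.support, countB c (degF (ε e)) = 1) :
    countB c (L ε s) = s.sum fun _ n => n := by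
  rw [L, map_finsuppSum]
  apply Finsupp.sum_congr
  intro e he
  rw [map_nsmul, hs e he, smul_eq_mul, mul_one]

lemma countB_erase (c : V → Bool) (d : V →₀ ℕ) (x : V) :
    countB c d = countB c (d.erase x) + (if c x then d x else 0) := by
  conv_lhs => rw [← Finsupp.erase_add_single x d]
  rw [map_add, countB_single]

lemma countB_two (c : V → Bool) (d : V →₀ ℕ) (u v : V) (huv : u ≠ v) :
    countB c d = countB c ((d.erase u).erase v)
      + (if c u then d u else 0) + (if c v then d v else 0) := by
  rw [countB_erase c d u, countB_erase c (d.erase u) v,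
    Finsupp.erase_ne (Ne.symm huv)]
  ring
lemma ker_mem_of_binomials (K : Type*) [Field K] (ε : E → Sym2 V)
    {J : Ideal (MvPolynomial E K)}
    (hbin : ∀ a b : E →₀ ℕ, L ε a = L ε b → monomial a (1:K) - monomial b 1 ∈ J)
    {p : MvPolynomial E K} (hp : aeval (edgeF K ε) p = 0) : p ∈ J := by
  classical
  generalize hn : p.support.card = n
  induction n using Nat.strong_induction_on generalizing p with
  | _ n ih =>
  rcases eq_or_ne p 0 with rfl | hp0
  · exact J.zero_mem
  · obtain ⟨a, ha⟩ := Finset.nonempty_iff_ne_empty.mpr (mt MvPolynomial.support_eq_empty.mp hp0)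
    have hca : coeff a p ≠ 0 := mem_support_iff.mp ha
    -- the coefficient of (L a) in aeval p is zero
    have hsum : ∑ w ∈ p.support, (if L ε w = L ε a then coeff w p else 0) = 0 := by
      have h1 : aeval (edgeF K ε) p
          = ∑ w ∈ p.support, monomial (L ε w) (coeff w p) := by
        conv_lhs => rw [p.as_sum]
        rw [map_sum]
        exact Finset.sum_congr rfl fun w _ => aeval_monomial' K ε w (coeff w p)
      have h2 := congrArg (coeff (L ε a)) h1
      rw [hp] at h2
      simp only [coeff_zero, coeff_sum, coeff_monomial] at h2
      exact h2.symm
    have hex : ∃ w ∈ p.support, w ≠ a ∧ L ε w = L ε a ∧ coeff w p ≠ 0 := by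
      by_contra hcon
      push_neg at hcon
      have h6 : ∑ w ∈ p.support, (if L ε w = L ε a then coeff w p else 0)
          = (fun w => if L ε w = L ε a then coeff w p else 0) a := by
        apply Finset.sum_eq_single
        · intro w hw hwa
          by_cases h : L ε w = L ε a
          · simp only [if_pos h]
            exact hcon w hw hwa h
          · simp only [if_neg h]
        · intro habs; exact absurd ha habs
      simp only [if_pos rfl] at h6
      rw [hsum] at h6; exact hca h6.symm
    obtain ⟨b, hbsupp, hba, hLba, hcb⟩ := hex
    set g : MvPolynomial E K := monomial a (1:K) - monomial b 1 with hg
    have hgJ : g ∈ J := hbin a b hLba.symm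
    set q : MvPolynomial E K := p - (coeff a p) • g with hq
    have hqaev : aeval (edgeF K ε) q = 0 := by
      rw [hq, map_sub, hp, map_smul, hg, map_sub, aeval_monomial', aeval_monomial',
        hLba, sub_self, smul_zero, sub_zero]
    have hqsupp : q.support ⊆ p.support.erase a := by
      intro x hx
      have hcq : coeff x q = coeff x p
          - coeff a p * ((if a = x then (1:K) else 0) - (if b = x then 1 else 0)) := by
        simp [hq, hg, coeff_monomial, mul_sub]
      rw [Finset.mem_erase]
      constructor
      · intro hxe
        subst hxe
        rw [if_pos rfl, if_neg hba] at hcq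
        refine mem_support_iff.mp hx ?_
        rw [hcq]; ring
      · by_contra hxp
        have h0 : coeff x p = 0 := notMem_support_iff.mp hxp
        have hax : a ≠ x := fun h => hxp (h ▸ ha)
        have hxb : b ≠ x := fun h => hxp (h ▸ hbsupp)
        rw [h0, if_neg hax, if_neg hxb] at hcq
        refine mem_support_iff.mp hx ?_
        rw [hcq]; ring
    have hcard : q.support.card < n := by
      calc q.support.card ≤ (p.support.erase a).card := Finset.card_le_card hqsupp
        _ < p.support.card := Finset.card_erase_lt_of_mem ha
        _ = n := hn
    have hqJ : q ∈ J := ih _ hcard hqaev rfl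
    have hpe : p = q + C (coeff a p) * g := by rw [hq, smul_eq_C_mul]; ring
    rw [hpe]
    exact J.add_mem hqJ (Ideal.mul_mem_left J _ hgJ)

lemma mapDomain_subtypeDomain (P : E → Prop) (s : E →₀ ℕ)
    (hs : ∀ e ∈ s.support, P e) :
    Finsupp.mapDomain (Subtype.val : {e // P e} → E) (s.subtypeDomain P) = s := by
  classical
  ext x
  by_cases hx : P x
  · have : x = (⟨x, hx⟩ : {e // P e}).val := rfl
    rw [this, Finsupp.mapDomain_apply Subtype.val_injective, Finsupp.subtypeDomain_apply]
  · rw [Finsupp.mapDomain_notin_range]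
    · symm
      by_contra h
      exact hx (hs x (Finsupp.mem_support_iff.mpr h))
    · rintro ⟨⟨y, hy⟩, rfl⟩
      exact hx hy
lemma edgeF_subtype (K : Type*) [Field K] (ε : E → Sym2 V) (P : E → Prop) :
    edgeF K (fun e : {e : E // P e} => ε e.val) = (edgeF K ε) ∘ Subtype.val := rfl

lemma graphToricIdeal_eq (K : Type*) [Field K] (ε : E → Sym2 V) :
    graphToricIdeal K ε = RingHom.ker (aeval (edgeF K ε) :
      MvPolynomial E K →ₐ[K] MvPolynomial V K) := rfl

lemma map_le_ker (K : Type*) [Field K] (ε : E → Sym2 V) (P : E → Prop) :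
    Ideal.map (MvPolynomial.rename (Subtype.val : {e : E // P e} → E)).toRingHom
      (graphToricIdeal K (fun e : {e : E // P e} => ε e.val)) ≤ graphToricIdeal K ε := by
  rw [Ideal.map_le_iff_le_comap]
  intro q hq
  have hq' : aeval (edgeF K (fun e : {e : E // P e} => ε e.val)) q = 0 := hq
  show aeval (edgeF K ε) (rename (Subtype.val : {e : E // P e} → E) q) = 0
  rw [aeval_rename, ← edgeF_subtype, hq']

lemma binom_mem_map (K : Type*) [Field K] (ε : E → Sym2 V) (P : E → Prop)
    (a b : E →₀ ℕ) (ha : ∀ e ∈ a.support, P e) (hb : ∀ e ∈ b.support, P e)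
    (hL : L ε a = L ε b) :
    monomial a (1:K) - monomial b 1 ∈
      Ideal.map (MvPolynomial.rename (Subtype.val : {e : E // P e} → E)).toRingHom
        (graphToricIdeal K (fun e : {e : E // P e} => ε e.val)) := by
  set q : MvPolynomial {e : E // P e} K :=
    monomial (a.subtypeDomain P) 1 - monomial (b.subtypeDomain P) 1 with hqdef
  have hren : rename (Subtype.val : {e : E // P e} → E) q
      = monomial a (1:K) - monomial b 1 := by
    rw [hqdef, map_sub, rename_monomial, rename_monomial,
      mapDomain_subtypeDomain P a ha, mapDomain_subtypeDomain P b hb]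
  have hqker : q ∈ graphToricIdeal K (fun e : {e : E // P e} => ε e.val) := by
    show aeval (edgeF K (fun e : {e : E // P e} => ε e.val)) q = 0
    have : aeval (edgeF K (fun e : {e : E // P e} => ε e.val)) q
        = aeval (edgeF K ε) (rename (Subtype.val : {e : E // P e} → E) q) := by
      rw [aeval_rename, ← edgeF_subtype]
    rw [this, hren, map_sub, aeval_monomial', aeval_monomial', hL, sub_self]
  have := Ideal.mem_map_of_mem
    (MvPolynomial.rename (Subtype.val : {e : E // P e} → E)).toRingHom hqker
  rwa [show (MvPolynomial.rename (Subtype.val : {e : E // P e} → E)).toRingHom q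
    = rename (Subtype.val : {e : E // P e} → E) q from rfl, hren] at this
lemma countB_degF_of (c : V → Bool) (s : Sym2 V)
    (h : ∀ x y, s = s(x, y) → c x ≠ c y) : countB c (degF s) = 1 := by
  revert h
  induction s using Sym2.ind with
  | _ p q => exact fun h => countB_degF c p q (h p q rfl)

lemma key_binom (K : Type*) [Field K] (ε : E → Sym2 V)
    (W₁ W₂ : Set V) (u v : V) (huv : u ≠ v) (e₀ : E) (he₀ : ε e₀ = s(u, v))
    (hint : W₁ ∩ W₂ = {u, v})
    (hedges : ∀ e : E, (∀ x ∈ ε e, x ∈ W₁) ∨ (∀ x ∈ ε e, x ∈ W₂))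
    (c : V → Bool) (hc : ∀ e : E, (∀ x ∈ ε e, x ∈ W₁) → ∀ x y, ε e = s(x, y) → c x ≠ c y)
    (J : Ideal (MvPolynomial E K))
    (hJ₁ : ∀ s t : E →₀ ℕ, (∀ e ∈ s.support, ∀ x ∈ ε e, x ∈ W₁) →
      (∀ e ∈ t.support, ∀ x ∈ ε e, x ∈ W₁) → L ε s = L ε t →
      monomial s (1:K) - monomial t 1 ∈ J)
    (hJ₂ : ∀ s t : E →₀ ℕ, (∀ e ∈ s.support, ∀ x ∈ ε e, x ∈ W₂) →
      (∀ e ∈ t.support, ∀ x ∈ ε e, x ∈ W₂) → L ε s = L ε t →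
      monomial s (1:K) - monomial t 1 ∈ J)
    (a b : E →₀ ℕ) (hL : L ε a = L ε b)
    (hT : ((b.filter (fun e => ∀ x ∈ ε e, x ∈ W₁)).sum fun _ n => n)
        ≤ (a.filter (fun e => ∀ x ∈ ε e, x ∈ W₁)).sum fun _ n => n) :
    monomial a (1:K) - monomial b 1 ∈ J := by
  classical
  set P₁ : E → Prop := fun e => ∀ x ∈ ε e, x ∈ W₁ with hP₁def
  set a₁ := a.filter P₁ with ha₁
  set a₂ := a.filter (fun e => ¬ P₁ e) with ha₂
  set b₁ := b.filter P₁ with hb₁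
  set b₂ := b.filter (fun e => ¬ P₁ e) with hb₂
  have hsa : a₁ + a₂ = a := Finsupp.filter_pos_add_filter_neg a P₁
  have hsb : b₁ + b₂ = b := Finsupp.filter_pos_add_filter_neg b P₁
  -- u, v in both sides
  have huW : u ∈ W₁ ∩ W₂ := by rw [hint]; left; rfl
  have hvW : v ∈ W₁ ∩ W₂ := by rw [hint]; right; rfl
  have hP₁e₀ : P₁ e₀ := by
    intro x hx
    rw [he₀, Sym2.mem_iff] at hx
    rcases hx with rfl | rfl
    · exact huW.1
    · exact hvW.1
  have hP₂e₀ : ∀ x ∈ ε e₀, x ∈ W₂ := by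
    intro x hx
    rw [he₀, Sym2.mem_iff] at hx
    rcases hx with rfl | rfl
    · exact huW.2
    · exact hvW.2
  have hcuv : c u ≠ c v := hc e₀ hP₁e₀ u v he₀
  -- support facts
  have hsupp_a₁ : ∀ e ∈ a₁.support, P₁ e := by
    intro e he
    rw [ha₁, Finsupp.support_filter, Finset.mem_filter] at he
    exact he.2
  have hsupp_b₁ : ∀ e ∈ b₁.support, P₁ e := by
    intro e he
    rw [hb₁, Finsupp.support_filter, Finset.mem_filter] at he
    exact he.2
  have hsupp_a₂ : ∀ e ∈ a₂.support, ∀ x ∈ ε e, x ∈ W₂ := by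
    intro e he
    rw [ha₂, Finsupp.support_filter, Finset.mem_filter] at he
    exact (hedges e).resolve_left he.2
  have hsupp_b₂ : ∀ e ∈ b₂.support, ∀ x ∈ ε e, x ∈ W₂ := by
    intro e he
    rw [hb₂, Finsupp.support_filter, Finset.mem_filter] at he
    exact (hedges e).resolve_left he.2
  -- pointwise values of L
  have hLa : ∀ x, L ε a x = L ε a₁ x + L ε a₂ x := by
    intro x; rw [← hsa, L_add]; rfl
  have hLb : ∀ x, L ε b x = L ε b₁ x + L ε b₂ x := by
    intro x; rw [← hsb, L_add]; rfl
  have hLab : ∀ x, L ε a x = L ε b x := fun x => DFunLike.congr_fun hL x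
  -- agreement of part-1 degrees away from u, v
  have hx1 : ∀ x : V, x ≠ u → x ≠ v → L ε a₁ x = L ε b₁ x := by
    intro x hxu hxv
    by_cases hxW : x ∈ W₁
    · have hxW2 : x ∉ W₂ := by
        intro h2
        have : x ∈ W₁ ∩ W₂ := ⟨hxW, h2⟩
        rw [hint] at this
        rcases this with h | h
        · exact hxu h
        · exact hxv h
      have h2a : L ε a₂ x = 0 := L_eq_zero_outside ε W₂ a₂ hsupp_a₂ hxW2
      have h2b : L ε b₂ x = 0 := L_eq_zero_outside ε W₂ b₂ hsupp_b₂ hxW2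
      have := hLab x
      rw [hLa x, hLb x, h2a, h2b] at this
      omega
    · have h1a : L ε a₁ x = 0 := L_eq_zero_outside ε W₁ a₁ hsupp_a₁ hxW
      have h1b : L ε b₁ x = 0 := L_eq_zero_outside ε W₁ b₁ hsupp_b₁ hxW
      rw [h1a, h1b]
  -- colour counting
  set c' : V → Bool := fun z => !(c z) with hc'def
  have hbic : ∀ e, P₁ e → countB c (degF (ε e)) = 1 ∧ countB c' (degF (ε e)) = 1 := by
    intro e he
    constructor
    · exact countB_degF_of c (ε e) (hc e he)
    · refine countB_degF_of c' (ε e) ?_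
      intro x y hxy h
      apply hc e he x y hxy
      rw [hc'def] at h
      simpa using h
  set Ta := a₁.sum (fun _ n => n) with hTa
  set Tb := b₁.sum (fun _ n => n) with hTb
  have hTa1 : countB c (L ε a₁) = Ta := countB_L c ε a₁ (fun e he => (hbic e (hsupp_a₁ e he)).1)
  have hTb1 : countB c (L ε b₁) = Tb := countB_L c ε b₁ (fun e he => (hbic e (hsupp_b₁ e he)).1)
  have hTa1' : countB c' (L ε a₁) = Ta := countB_L c' ε a₁ (fun e he => (hbic e (hsupp_a₁ e he)).2)
  have hTb1' : countB c' (L ε b₁) = Tb := countB_L c' ε b₁ (fun e he => (hbic e (hsupp_b₁ e he)).2)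
  have herase : ((L ε a₁).erase u).erase v = ((L ε b₁).erase u).erase v := by
    ext x
    rcases eq_or_ne x v with rfl | hxv
    · rw [Finsupp.erase_same, Finsupp.erase_same]
    · rw [Finsupp.erase_ne hxv, Finsupp.erase_ne hxv]
      rcases eq_or_ne x u with rfl | hxu
      · rw [Finsupp.erase_same, Finsupp.erase_same]
      · rw [Finsupp.erase_ne hxu, Finsupp.erase_ne hxu]
        exact hx1 x hxu hxv
  have hA := countB_two c (L ε a₁) u v huv
  have hB := countB_two c (L ε b₁) u v huv
  have hA' := countB_two c' (L ε a₁) u v huv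
  have hB' := countB_two c' (L ε b₁) u v huv
  rw [herase, hTa1] at hA
  rw [hTb1] at hB
  rw [herase, hTa1'] at hA'
  rw [hTb1'] at hB'
  have hkey_uv : Ta + L ε b₁ u = Tb + L ε a₁ u ∧ Ta + L ε b₁ v = Tb + L ε a₁ v := by
    have hcv : c v ≠ c u := Ne.symm hcuv
    cases hcu : c u <;> cases hcvv : c v <;>
      rw [hcu, hcvv] at hcv <;>
      simp [hc'def, hcu, hcvv] at hA hB hA' hB' <;>
      first
        | exact absurd rfl hcv
        | exact ⟨by omega, by omega⟩
  -- the transfer number k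
  set k := Ta - Tb with hk
  have hku : L ε a₁ u = L ε b₁ u + k := by
    have h1 := hkey_uv.1
    omega
  have hkv : L ε a₁ v = L ε b₁ v + k := by
    have h1 := hkey_uv.2
    omega
  -- intermediate exponent vectors
  set m := b₁ + Finsupp.single e₀ k with hm
  set n' := a₂ + Finsupp.single e₀ k with hn'
  have hdeg_e₀ : ∀ x, degF (ε e₀) x = (if u = x then 1 else 0) + (if v = x then 1 else 0) := by
    intro x; rw [he₀, degF_apply]
  have hsingle_L : ∀ x, L ε (Finsupp.single e₀ k) x = k * degF (ε e₀) x := by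
    intro x; rw [L_single]; exact Finsupp.smul_apply k (degF (ε e₀)) x
  have hLm : L ε m = L ε a₁ := by
    ext x
    rw [hm, L_add, Finsupp.add_apply, hsingle_L, hdeg_e₀]
    rcases eq_or_ne u x with rfl | hxu
    · rw [if_pos rfl, if_neg (Ne.symm huv)]
      rw [hku]; ring
    · rcases eq_or_ne v x with rfl | hxv
      · rw [if_neg huv, if_pos rfl]
        rw [hkv]; ring
      · rw [if_neg hxu, if_neg hxv, hx1 x (Ne.symm hxu) (Ne.symm hxv)]
        ring
  have hLn : L ε n' = L ε b₂ := by
    ext x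
    rw [hn', L_add, Finsupp.add_apply, hsingle_L, hdeg_e₀]
    rcases eq_or_ne u x with rfl | hxu
    · rw [if_pos rfl, if_neg (Ne.symm huv)]
      have h1 := hLab u
      rw [hLa u, hLb u, hku] at h1
      omega
    · rcases eq_or_ne v x with rfl | hxv
      · rw [if_neg huv, if_pos rfl]
        have h1 := hLab v
        rw [hLa v, hLb v, hkv] at h1
        omega
      · rw [if_neg hxu, if_neg hxv]
        by_cases hxW : x ∈ W₂
        · have hxW1 : x ∉ W₁ := by
            intro h2
            have : x ∈ W₁ ∩ W₂ := ⟨h2, hxW⟩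
            rw [hint] at this
            rcases this with h | h
            · exact hxu h.symm
            · exact hxv h.symm
          have h1a : L ε a₁ x = 0 := L_eq_zero_outside ε W₁ a₁ hsupp_a₁ hxW1
          have h1b : L ε b₁ x = 0 := L_eq_zero_outside ε W₁ b₁ hsupp_b₁ hxW1
          have h1 := hLab x
          rw [hLa x, hLb x, h1a, h1b] at h1
          omega
        · have h2a : L ε a₂ x = 0 := L_eq_zero_outside ε W₂ a₂ hsupp_a₂ hxW
          have h2b : L ε b₂ x = 0 := L_eq_zero_outside ε W₂ b₂ hsupp_b₂ hxW
          rw [h2a, h2b]; ring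
  -- support of the intermediates
  have hsupp_m : ∀ e ∈ m.support, P₁ e := by
    intro e he
    rcases Finset.mem_union.mp (Finsupp.support_add he) with h | h
    · exact hsupp_b₁ e h
    · have : e = e₀ := Finset.mem_singleton.mp (Finsupp.support_single_subset h)
      rw [this]; exact hP₁e₀
  have hsupp_n : ∀ e ∈ n'.support, ∀ x ∈ ε e, x ∈ W₂ := by
    intro e he
    rcases Finset.mem_union.mp (Finsupp.support_add he) with h | h
    · exact hsupp_a₂ e h
    · have : e = e₀ := Finset.mem_singleton.mp (Finsupp.support_single_subset h)
      rw [this]; exact hP₂e₀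
  -- the algebraic identity
  have e2 : a₂ + m = b₁ + n' := by
    rw [hm, hn']; exact add_left_comm a₂ b₁ _
  have e1 : a₂ + a₁ = a := by rw [add_comm]; exact hsa
  have e3 : b₁ + b₂ = b := hsb
  have hkey : monomial a (1:K) - monomial b 1
      = monomial a₂ 1 * (monomial a₁ 1 - monomial m 1)
        + monomial b₁ 1 * (monomial n' 1 - monomial b₂ 1) := by
    rw [mul_sub, mul_sub, monomial_mul, monomial_mul, monomial_mul, monomial_mul,
      e1, e2, e3, one_mul]
    ring
  rw [hkey]
  exact J.add_mem
    (Ideal.mul_mem_left J _ (hJ₁ a₁ m hsupp_a₁ hsupp_m hLm.symm))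
    (Ideal.mul_mem_left J _ (hJ₂ n' b₂ hsupp_n hsupp_b₂ hLn))
end TS13

open TS13 in
/-- Let `G` be a graph whose induced subgraphs `G₁` (on `W₁`) and `G₂`
(on `W₂`) form a splitting of `G` along a single edge `e = {u, v}`: the vertex subsets cover
`V(G)`, intersect exactly in `{u, v}`, and every edge of `G` lies within `W₁` or within `W₂`
(equivalently, removing `u` and `v` disconnects the two remainders).  If `G₁` is bipartite,
then `I_G = I_{G₁} + I_{G₂}` in `K[E(G)]` (the toric ideals of `G₁` and `G₂` being viewed in
`K[E(G)]` via the inclusion of edges). -/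
theorem toric_splittings_stmt13 {V E : Type*} (K : Type*) [Field K]
    (ε : E → Sym2 V) (hinj : Function.Injective ε) (hnd : ∀ e, ¬ (ε e).IsDiag)
    (W₁ W₂ : Set V) (u v : V) (huv : u ≠ v) (e₀ : E) (he₀ : ε e₀ = s(u, v))
    (hcover : W₁ ∪ W₂ = Set.univ) (hint : W₁ ∩ W₂ = {u, v})
    (hedges : ∀ e : E, (∀ x ∈ ε e, x ∈ W₁) ∨ (∀ x ∈ ε e, x ∈ W₂))
    (hbip : ∃ c : V → Bool, ∀ e : E, (∀ x ∈ ε e, x ∈ W₁) →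
      ∀ x y, ε e = s(x, y) → c x ≠ c y) :
    graphToricIdeal K ε =
      Ideal.map (MvPolynomial.rename
            (Subtype.val : {e : E // ∀ x ∈ ε e, x ∈ W₁} → E)).toRingHom
          (graphToricIdeal K (fun e : {e : E // ∀ x ∈ ε e, x ∈ W₁} => ε e.val)) ⊔
        Ideal.map (MvPolynomial.rename
            (Subtype.val : {e : E // ∀ x ∈ ε e, x ∈ W₂} → E)).toRingHom
          (graphToricIdeal K (fun e : {e : E // ∀ x ∈ ε e, x ∈ W₂} => ε e.val)) := by
  classical
  obtain ⟨c, hc⟩ := hbip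
  set J₁ := Ideal.map (MvPolynomial.rename
      (Subtype.val : {e : E // ∀ x ∈ ε e, x ∈ W₁} → E)).toRingHom
      (graphToricIdeal K (fun e : {e : E // ∀ x ∈ ε e, x ∈ W₁} => ε e.val)) with hJ₁def
  set J₂ := Ideal.map (MvPolynomial.rename
      (Subtype.val : {e : E // ∀ x ∈ ε e, x ∈ W₂} → E)).toRingHom
      (graphToricIdeal K (fun e : {e : E // ∀ x ∈ ε e, x ∈ W₂} => ε e.val)) with hJ₂def
  have hJ₁mem : ∀ s t : E →₀ ℕ, (∀ e ∈ s.support, ∀ x ∈ ε e, x ∈ W₁) →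
      (∀ e ∈ t.support, ∀ x ∈ ε e, x ∈ W₁) → L ε s = L ε t →
      monomial s (1:K) - monomial t 1 ∈ J₁ ⊔ J₂ := by
    intro s t hs ht hLst
    exact Ideal.mem_sup_left
      (binom_mem_map K ε (fun e => ∀ x ∈ ε e, x ∈ W₁) s t hs ht hLst)
  have hJ₂mem : ∀ s t : E →₀ ℕ, (∀ e ∈ s.support, ∀ x ∈ ε e, x ∈ W₂) →
      (∀ e ∈ t.support, ∀ x ∈ ε e, x ∈ W₂) → L ε s = L ε t →
      monomial s (1:K) - monomial t 1 ∈ J₁ ⊔ J₂ := by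
    intro s t hs ht hLst
    exact Ideal.mem_sup_right
      (binom_mem_map K ε (fun e => ∀ x ∈ ε e, x ∈ W₂) s t hs ht hLst)
  apply le_antisymm
  · intro p hp
    have hp' : aeval (edgeF K ε) p = 0 := hp
    refine ker_mem_of_binomials K ε ?_ hp'
    intro a b hLab
    rcases le_total ((b.filter (fun e => ∀ x ∈ ε e, x ∈ W₁)).sum fun _ n => n)
        ((a.filter (fun e => ∀ x ∈ ε e, x ∈ W₁)).sum fun _ n => n) with h | h
    · exact key_binom K ε W₁ W₂ u v huv e₀ he₀ hint hedges c hc (J₁ ⊔ J₂)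
        hJ₁mem hJ₂mem a b hLab h
    · have hmem := key_binom K ε W₁ W₂ u v huv e₀ he₀ hint hedges c hc (J₁ ⊔ J₂)
        hJ₁mem hJ₂mem b a hLab.symm h
      have : monomial a (1:K) - monomial b 1
          = -(monomial b (1:K) - monomial a 1) := by ring
      rw [this]
      exact neg_mem hmem
  · exact sup_le (map_le_ker K ε _) (map_le_ker K ε _)
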